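/- If F is an acyclic graph (forest) on n vertices, then α_4(F) ≥ 3n/4, where α_4 denotes the generalized 4-independence number. -/

import Mathlib

/-- `S` is a generalized `k`-independent set of `G`: the induced subgraph `G[S]` contains no
tree on `k` vertices as a subgraph, equivalently every connected component of `G[S]` has
fewer than `k` vertices, equivalently every connected induced subgraph inside `S` has
fewer than `k` vertices. -/
def SimpleGraph.IsGenIndepSet {V : Type*} (G : SimpleGraph V) (k : ℕ) (S : Finset V) : Prop :=
  ∀ T : Finset V, T ⊆ S → (G.induce (T : Set V)).Connected → T.card < k

/-- The generalized `k`-independence number `α_k(G)`, the maximum cardinality of a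
generalized `k`-independent set. -/
noncomputable def SimpleGraph.genIndepNum {V : Type*} (G : SimpleGraph V) (k : ℕ) : ℕ :=
  sSup {n | ∃ S : Finset V, G.IsGenIndepSet k S ∧ S.card = n}

section Helpers

open SimpleGraph Finset

variable {V : Type*} {G : SimpleGraph V}

lemma walk_prop {P : V → Prop} : ∀ {a b : V} (w : G.Walk a b), P a →
    (∀ x y, G.Adj x y → x ∈ w.support → y ∈ w.support → P x → P y) → P b := by
  intro a b w
  induction w with
  | nil => intro h _; exact h
  | cons h q ih =>
    intro ha hstep
    refine ih (hstep _ _ h (by simp) (by simp [Walk.start_mem_support]) ha) ?_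
    intro x y hxy hx hy hPx
    exact hstep x y hxy (by simp [hx]) (by simp [hy]) hPx

lemma induce_walk {T : Finset V} (hconn : (G.induce (T : Set V)).Connected)
    {a b : V} (ha : a ∈ T) (hb : b ∈ T) :
    ∃ w : G.Walk a b, ∀ v ∈ w.support, v ∈ T := by
  obtain ⟨w'⟩ := hconn.preconnected ⟨a, ha⟩ ⟨b, hb⟩
  refine ⟨w'.map ⟨Subtype.val, fun h => h⟩, ?_⟩
  intro v hv
  rw [Walk.support_map, List.mem_map] at hv
  obtain ⟨⟨x, hx⟩, _, rfl⟩ := hv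
  exact hx

lemma induce_nonempty {T : Finset V} (hconn : (G.induce (T : Set V)).Connected) :
    T.Nonempty := by
  obtain ⟨⟨x, hx⟩⟩ := hconn.nonempty
  exact ⟨x, hx⟩

lemma eq_of_walk_length_zero {a b : V} (s : G.Walk a b) (h : s.length = 0) : a = b := by
  cases s with
  | nil => rfl
  | cons h q => simp at h


lemma walk_boundary {P : V → Prop} : ∀ {a b : V} (w : G.Walk a b), P a → ¬ P b →
    ∃ x y, G.Adj x y ∧ x ∈ w.support ∧ y ∈ w.support ∧ P x ∧ ¬ P y := by
  intro a b w
  induction w with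
  | nil => intro h h'; exact absurd h h'
  | @cons a c b h q ih =>
    intro ha hb
    by_cases hc : P c
    · obtain ⟨x, y, hxy, hx, hy, hPx, hPy⟩ := ih hc hb
      exact ⟨x, y, hxy, by simp [hx], by simp [hy], hPx, hPy⟩
    · exact ⟨a, c, h, by simp, by simp [Walk.start_mem_support], ha, hc⟩

lemma exists_pendant [DecidableEq V] (hacyc : G.IsAcyclic) (A T : Finset V) (hTA : T ⊆ A)
    (hcard : 4 ≤ T.card) (hconn : (G.induce (T : Set V)).Connected) :
    ∃ (u : V) (B : Finset V), u ∈ B ∧ B ⊆ A ∧ 4 ≤ B.card ∧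
      (∀ x ∈ B.erase u, ∀ y ∈ A, y ∉ B → ¬ G.Adj x y) ∧
      G.IsGenIndepSet 4 (B.erase u) := by
  classical
  obtain ⟨r, hrT⟩ := induce_nonempty hconn
  set Cset : Finset V :=
    A.filter (fun x => ∃ w : G.Walk r x, w.IsPath ∧ ∀ v ∈ w.support, v ∈ A) with hCdef
  have hpex : ∀ x ∈ Cset, ∃ w : G.Walk r x, w.IsPath ∧ ∀ v ∈ w.support, v ∈ A := by
    intro x hx
    exact (Finset.mem_filter.mp hx).2
  choose p hp hpA using hpex
  have hCA : Cset ⊆ A := Finset.filter_subset _ _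
  have hmemC : ∀ x ∈ A, ∀ (w : G.Walk r x), w.IsPath → (∀ v ∈ w.support, v ∈ A) →
      x ∈ Cset := by
    intro x hxA w hw hwA
    exact Finset.mem_filter.mpr ⟨hxA, w, hw, hwA⟩
  have huniq : ∀ (x : V) (hx : x ∈ Cset) (q : G.Walk r x), q.IsPath → q = p x hx := by
    intro x hx q hq
    have := hacyc.path_unique ⟨q, hq⟩ ⟨p x hx, hp x hx⟩
    exact congrArg Subtype.val this
  -- prefix lemma
  have hpre : ∀ (x : V) (hx : x ∈ Cset) (y : V), y ∈ (p x hx).support →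
      ∃ (hyC : y ∈ Cset) (s : G.Walk y x), p x hx = (p y hyC).append s := by
    intro x hx y hy
    obtain ⟨q, s, hqs⟩ := Walk.mem_support_iff_exists_append.mp hy
    have hqpath : q.IsPath := by
      have := hp x hx; rw [hqs] at this; exact this.of_append_left
    have hqA : ∀ v ∈ q.support, v ∈ A := by
      intro v hv
      exact hpA x hx v (by rw [hqs, Walk.mem_support_append_iff]; exact Or.inl hv)
    have hyC : y ∈ Cset := hmemC y (hqA y q.end_mem_support) q hqpath hqA
    have hq : q = p y hyC := huniq y hyC q hqpath
    exact ⟨hyC, s, by rw [hqs, hq]⟩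
  have hsuppmono : ∀ (x : V) (hx : x ∈ Cset) (y : V) (hy : y ∈ (p x hx).support)
      (hyC : y ∈ Cset), (p y hyC).support ⊆ (p x hx).support := by
    intro x hx y hy hyC v hv
    obtain ⟨hyC', s, hs⟩ := hpre x hx y hy
    rw [hs, Walk.mem_support_append_iff]
    exact Or.inl hv
  -- antisymmetry
  have hanti : ∀ (x : V) (hx : x ∈ Cset) (y : V) (hy : y ∈ Cset),
      x ∈ (p y hy).support → y ∈ (p x hx).support → x = y := by
    intro x hx y hy hxy hyx
    obtain ⟨hxC, s, hs⟩ := hpre y hy x hxy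
    obtain ⟨hyC, s', hs'⟩ := hpre x hx y hyx
    have h1 := congrArg Walk.length hs
    have h2 := congrArg Walk.length hs'
    rw [Walk.length_append] at h1 h2
    have hslen : s.length = 0 := by omega
    exact eq_of_walk_length_zero s hslen
  -- comparability of two vertices on the same path
  have hcomp : ∀ (x : V) (hx : x ∈ Cset) (a b : V), a ∈ (p x hx).support →
      b ∈ (p x hx).support → ∀ (haC : a ∈ Cset) (hbC : b ∈ Cset),
      a ∈ (p b hbC).support ∨ b ∈ (p a haC).support := by
    intro x hx a b ha hb haC hbC
    obtain ⟨hbC', s, hs⟩ := hpre x hx b hb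
    rw [hs, Walk.mem_support_append_iff] at ha
    rcases ha with ha | ha
    · exact Or.inl ha
    · obtain ⟨s1, s2, hss⟩ := Walk.mem_support_iff_exists_append.mp ha
      right
      have hx2 : p x hx = ((p b hbC').append s1).append s2 := by
        rw [hs, hss, Walk.append_assoc]
      have hqpath : ((p b hbC').append s1).IsPath := by
        have := hp x hx; rw [hx2] at this; exact this.of_append_left
      have hqA : ∀ v ∈ ((p b hbC').append s1).support, v ∈ A := by
        intro v hv
        refine hpA x hx v ?_
        rw [hx2, Walk.mem_support_append_iff]; exact Or.inl hv
      have haC' : a ∈ Cset :=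
        hmemC a (hqA a (Walk.end_mem_support _)) _ hqpath hqA
      have : (p b hbC').append s1 = p a haC := huniq a haC _ hqpath
      rw [← this, Walk.mem_support_append_iff]
      exact Or.inl (Walk.end_mem_support _)
  -- adjacency: supports are comparable
  have hstep : ∀ (x : V) (hx : x ∈ Cset) (y : V), y ∈ A → G.Adj x y →
      ∃ hyC : y ∈ Cset, (p x hx).support ⊆ (p y hyC).support ∨
        (p y hyC).support ⊆ (p x hx).support := by
    intro x hx y hyA hxy
    by_cases hy : y ∈ (p x hx).support
    · obtain ⟨hyC, s, hs⟩ := hpre x hx y hy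
      exact ⟨hyC, Or.inr (hsuppmono x hx y hy hyC)⟩
    · have hqpath : ((p x hx).concat hxy).IsPath := by
        rw [Walk.isPath_def, Walk.support_concat]
        refine List.Nodup.append (hp x hx).support_nodup (List.nodup_singleton y) ?_
        intro v hv hv'
        rw [List.mem_singleton] at hv'
        subst hv'
        exact hy hv
      have hqA : ∀ v ∈ ((p x hx).concat hxy).support, v ∈ A := by
        intro v hv
        rw [Walk.support_concat, List.mem_append] at hv
        rcases hv with hv | hv
        · exact hpA x hx v hv
        · rw [List.mem_singleton] at hv; subst hv; exact hyA
      have hyC : y ∈ Cset := hmemC y hyA _ hqpath hqA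
      have heq : (p x hx).concat hxy = p y hyC := huniq y hyC _ hqpath
      refine ⟨hyC, Or.inl ?_⟩
      intro v hv
      rw [← heq, Walk.support_concat, List.mem_append]
      exact Or.inl hv
  -- the "subtree" sets
  set D : V → Finset V :=
    fun u => Cset.filter (fun x => ∀ hx : x ∈ Cset, u ∈ (p x hx).support) with hDdef
  have hmemD : ∀ (u x : V) (hx : x ∈ Cset), (x ∈ D u ↔ u ∈ (p x hx).support) := by
    intro u x hx
    rw [hDdef]
    simp only [Finset.mem_filter]
    constructor
    · intro ⟨_, h⟩; exact h hx
    · intro h; exact ⟨hx, fun hx' => h⟩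
  have hDC : ∀ u, D u ⊆ Cset := fun u => Finset.filter_subset _ _
  -- r and all of T are in Cset
  have hrA : r ∈ A := hTA hrT
  have hrC : r ∈ Cset := hmemC r hrA Walk.nil (by simp) (by simp [hrA])
  have hTC : ∀ t ∈ T, t ∈ Cset := by
    intro t ht
    obtain ⟨w, hw⟩ := induce_walk hconn hrT ht
    exact hmemC t (hTA ht) w.bypass w.bypass_isPath
      (fun v hv => hTA (hw v (w.support_bypass_subset hv)))
  have hTDr : T ⊆ D r := by
    intro t ht
    exact (hmemD r t (hTC t ht)).mpr (Walk.start_mem_support _)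
  -- candidates
  set Cand : Finset V := Cset.filter (fun u => 4 ≤ (D u).card) with hCanddef
  have hrCand : r ∈ Cand := by
    rw [hCanddef, Finset.mem_filter]
    exact ⟨hrC, le_trans hcard (Finset.card_le_card hTDr)⟩
  obtain ⟨u, huCand, humin⟩ :=
    Finset.exists_min_image Cand (fun u => (D u).card) ⟨r, hrCand⟩
  have huC : u ∈ Cset := (Finset.mem_filter.mp huCand).1
  have huDcard : 4 ≤ (D u).card := (Finset.mem_filter.mp huCand).2
  refine ⟨u, D u, (hmemD u u huC).mpr (Walk.end_mem_support _),
    (hDC u).trans hCA, huDcard, ?_, ?_⟩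
  · -- no crossing edges
    intro x hxe y hyA hyB hadj
    have hxD : x ∈ D u := Finset.mem_of_mem_erase hxe
    have hxu : x ≠ u := Finset.ne_of_mem_erase hxe
    have hxC : x ∈ Cset := hDC u hxD
    have hux : u ∈ (p x hxC).support := (hmemD u x hxC).mp hxD
    obtain ⟨hyC, hcase⟩ := hstep x hxC y hyA hadj
    have hyD : y ∉ (p y hyC).support → False := fun h => h (Walk.end_mem_support _)
    have huy : u ∉ (p y hyC).support := by
      intro h
      exact hyB ((hmemD u y hyC).mpr h)
    rcases hcase with hc | hc
    · exact huy (hc hux)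
    · -- y is on the path to x, before u
      have hyx : y ∈ (p x hxC).support := hc (Walk.end_mem_support _)
      rcases hcomp x hxC u y hux hyx huC hyC with h | h
      · exact huy h
      · -- y ∈ support of p u : y strictly above u; derive contradiction via lengths
        have hxpy : x ∉ (p y hyC).support := by
          intro hxy
          -- then x ∈ supp p y ⊆ supp p u, and u ∈ supp p x → x = u
          have hxpu : x ∈ (p u huC).support := hsuppmono u huC y h hyC hxy
          exact hxu (hanti x hxC u huC hxpu hux)
        -- p x = (p y).concat adj, so length p x = length p y + 1
        have hqpath : ((p y hyC).concat hadj.symm).IsPath := by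
          rw [Walk.isPath_def, Walk.support_concat]
          refine List.Nodup.append (hp y hyC).support_nodup (List.nodup_singleton x) ?_
          intro v hv hv'
          rw [List.mem_singleton] at hv'
          subst hv'
          exact hxpy hv
        have heq : (p y hyC).concat hadj.symm = p x hxC := huniq x hxC _ hqpath
        have hlen1 : (p x hxC).length = (p y hyC).length + 1 := by
          rw [← heq, Walk.length_concat]
        obtain ⟨huC', s, hs⟩ := hpre x hxC u hux
        obtain ⟨hyC', s', hs'⟩ := hpre u huC y h
        have h1 := congrArg Walk.length hs
        have h2 := congrArg Walk.length hs'
        rw [Walk.length_append] at h1 h2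
        have hsx : s.length ≠ 0 := by
          intro h0
          exact hxu (eq_of_walk_length_zero s h0).symm
        have hsy : s'.length ≠ 0 := by
          intro h0
          have hyu : y = u := eq_of_walk_length_zero s' h0
          subst hyu
          exact hyB ((hmemD y y huC).mpr (Walk.end_mem_support _))
        omega
  · -- the erased subtree is 4-independent
    intro T' hT'sub hT'conn
    by_contra hbig
    push_neg at hbig
    obtain ⟨t0, ht0⟩ := induce_nonempty hT'conn
    have hT'D : ∀ t ∈ T', t ∈ D u := fun t ht => Finset.mem_of_mem_erase (hT'sub ht)
    have hT'C : ∀ t ∈ T', t ∈ Cset := fun t ht => hDC u (hT'D t ht)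
    have hT'u : ∀ t ∈ T', t ≠ u := fun t ht => Finset.ne_of_mem_erase (hT'sub ht)
    obtain ⟨v, hvT', hvmin⟩ := Finset.exists_min_image T'
      (fun x => if hx : x ∈ Cset then (p x hx).length else 0) ⟨t0, ht0⟩
    have hvC : v ∈ Cset := hT'C v hvT'
    -- every t in T' has v on its path
    have hvall : ∀ t (ht : t ∈ T') (htC : t ∈ Cset), v ∈ (p t htC).support := by
      intro t ht htC
      obtain ⟨w, hw⟩ := induce_walk hT'conn hvT' ht
      have := walk_prop (G := G) (P := fun x => ∃ hx : x ∈ Cset, v ∈ (p x hx).support)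
        w ⟨hvC, Walk.end_mem_support _⟩ ?_
      · obtain ⟨hx, hmem⟩ := this
        exact hmem
      · intro x y hxy hxs hys ⟨hxC, hvx⟩
        have hxT' : x ∈ T' := hw x hxs
        have hyT' : y ∈ T' := hw y hys
        have hyC : y ∈ Cset := hT'C y hyT'
        refine ⟨hyC, ?_⟩
        obtain ⟨hyC', hcase⟩ := hstep x hxC y (hCA hyC) hxy
        rcases hcase with hc | hc
        · exact hc hvx
        · have hyx : y ∈ (p x hxC).support := hc (Walk.end_mem_support _)
          rcases hcomp x hxC v y hvx hyx hvC hyC with h | h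
          · exact h
          · -- y on path of v; minimality forces y = v
            obtain ⟨hyC'', s, hs⟩ := hpre v hvC y h
            have h1 := congrArg Walk.length hs
            rw [Walk.length_append] at h1
            have hmin := hvmin y hyT'
            simp only [dif_pos hvC, dif_pos hyC] at hmin
            have hs0 : s.length = 0 := by omega
            have : y = v := eq_of_walk_length_zero s hs0
            subst this
            exact Walk.end_mem_support _
    -- T' ⊆ D v
    have hT'Dv : T' ⊆ D v := by
      intro t ht
      exact (hmemD v t (hT'C t ht)).mpr (hvall t ht (hT'C t ht))
    have hvCand : v ∈ Cand := by
      rw [hCanddef, Finset.mem_filter]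
      exact ⟨hvC, le_trans hbig (Finset.card_le_card hT'Dv)⟩
    -- D v ⊆ (D u).erase u
    have hDvDu : D v ⊆ (D u).erase u := by
      intro x hx
      have hxC : x ∈ Cset := hDC v hx
      have hvx : v ∈ (p x hxC).support := (hmemD v x hxC).mp hx
      have huv : u ∈ (p v hvC).support := (hmemD u v hvC).mp (hT'D v hvT')
      have hux : u ∈ (p x hxC).support := hsuppmono x hxC v hvx hvC huv
      refine Finset.mem_erase.mpr ⟨?_, (hmemD u x hxC).mpr hux⟩
      intro hxeq
      subst hxeq
      exact hT'u v hvT' (hanti x huC v hvC huv ((hmemD v x hxC).mp hx)).symm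
    have hDvcard : (D v).card ≤ (D u).card - 1 := by
      have := Finset.card_le_card hDvDu
      have hcu : ((D u).erase u).card = (D u).card - 1 :=
        Finset.card_erase_of_mem ((hmemD u u huC).mpr (Walk.end_mem_support _))
      omega
    have := humin v hvCand
    omega

lemma key_induction [DecidableEq V] (hacyc : G.IsAcyclic) :
    ∀ (n : ℕ) (A : Finset V), A.card ≤ n →
      ∃ S : Finset V, S ⊆ A ∧ G.IsGenIndepSet 4 S ∧ 3 * A.card ≤ 4 * S.card := by
  intro n
  induction n with
  | zero =>
    intro A hA
    refine ⟨∅, Finset.empty_subset _, ?_, by omega⟩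
    intro T hT _
    have h0 : T.card ≤ (∅ : Finset V).card := Finset.card_le_card hT
    rw [Finset.card_empty] at h0
    omega
  | succ n ih =>
    intro A hA
    by_cases hgen : G.IsGenIndepSet 4 A
    · exact ⟨A, Finset.Subset.refl _, hgen, by omega⟩
    · rw [SimpleGraph.IsGenIndepSet] at hgen
      push_neg at hgen
      obtain ⟨T, hTA, hTconn, hTcard⟩ := hgen
      obtain ⟨u, B, huB, hBA, hBcard, hnocross, hBindep⟩ :=
        exists_pendant hacyc A T hTA hTcard hTconn
      have hBA' : (A \ B).card = A.card - B.card := Finset.card_sdiff_of_subset hBA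
      have hBle : B.card ≤ A.card := Finset.card_le_card hBA
      obtain ⟨S', hS'sub, hS'indep, hS'count⟩ := ih (A \ B) (by omega)
      have hdisj : Disjoint S' (B.erase u) := by
        refine Finset.disjoint_left.mpr ?_
        intro a haS' haB
        exact (Finset.mem_sdiff.mp (hS'sub haS')).2 (Finset.mem_of_mem_erase haB)
      refine ⟨S' ∪ B.erase u, ?_, ?_, ?_⟩
      · intro a ha
        rcases Finset.mem_union.mp ha with h | h
        · exact (Finset.sdiff_subset) (hS'sub h)
        · exact hBA (Finset.mem_of_mem_erase h)
      · -- independence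
        intro T' hT'sub hT'conn
        have hsplit : T' ⊆ S' ∨ T' ⊆ B.erase u := by
          by_contra hc
          push_neg at hc
          obtain ⟨hc1, hc2⟩ := hc
          obtain ⟨b, hbT', hbnot⟩ := Finset.not_subset.mp hc2
          have hbS' : b ∈ S' := by
            rcases Finset.mem_union.mp (hT'sub hbT') with h | h
            · exact h
            · exact absurd h hbnot
          obtain ⟨a, haT', hanot⟩ := Finset.not_subset.mp hc1
          have haB : a ∈ B.erase u := by
            rcases Finset.mem_union.mp (hT'sub haT') with h | h
            · exact absurd h hanot
            · exact h
          obtain ⟨w, hw⟩ := induce_walk hT'conn haT' hbT'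
          obtain ⟨x, y, hxy, hxs, hys, hPx, hPy⟩ :=
            walk_boundary (P := fun z => z ∈ B.erase u) w haB (by
              intro hb; exact (Finset.disjoint_right.mp hdisj hb) hbS')
          have hyS' : y ∈ S' := by
            rcases Finset.mem_union.mp (hT'sub (hw y hys)) with h | h
            · exact h
            · exact absurd h hPy
          have hyAB : y ∈ A \ B := hS'sub hyS'
          rw [Finset.mem_sdiff] at hyAB
          exact hnocross x hPx y hyAB.1 hyAB.2 hxy
        rcases hsplit with h | h
        · exact hS'indep T' h hT'conn
        · exact hBindep T' h hT'conn
      · -- counting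
        have hcard_erase : (B.erase u).card = B.card - 1 := Finset.card_erase_of_mem huB
        have hcard_union : (S' ∪ B.erase u).card = S'.card + (B.erase u).card :=
          Finset.card_union_of_disjoint hdisj
        omega


end Helpers

/-- If `F` is an acyclic graph (forest) on `n` vertices, then `α₄(F) ≥ 3n/4`. -/
theorem genIndepNum_forest_ge {V : Type*} [Fintype V] (G : SimpleGraph V)
    (hacyc : G.IsAcyclic) :
    (G.genIndepNum 4 : ℚ) ≥ 3 * (Nat.card V : ℚ) / 4 := by
  classical
  obtain ⟨S, _, hSindep, hScount⟩ :=
    key_induction hacyc (Fintype.card V) (Finset.univ : Finset V)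
      (by rw [Finset.card_univ])
  rw [Finset.card_univ] at hScount
  have hle : S.card ≤ G.genIndepNum 4 := by
    apply le_csSup
    · refine ⟨Fintype.card V, ?_⟩
      rintro m ⟨S', _, rfl⟩
      exact Finset.card_le_univ S'
    · exact ⟨S, hSindep, rfl⟩
  have h4 : 3 * Fintype.card V ≤ 4 * G.genIndepNum 4 := by
    calc 3 * Fintype.card V ≤ 4 * S.card := hScount
    _ ≤ 4 * G.genIndepNum 4 := by omega
  rw [ge_iff_le, div_le_iff₀ (by norm_num : (0:ℚ) < 4)]
  rw [Nat.card_eq_fintype_card]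
  have : ((3 * Fintype.card V : ℕ) : ℚ) ≤ ((4 * G.genIndepNum 4 : ℕ) : ℚ) := by
    exact_mod_cast h4
  push_cast at this
  linarith
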